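/- arXiv:2207.05887 — 5 statements merged into one kernel-verified Lean document; each statement's English description precedes it below -/
import Mathlib

section
/- Let α ∈ (0,1] and let x₀ ∈ (-1, 0]. Then for every real x ≥ x₀, one has (1+x)^(-α) ≤ 1 - α·x + (α(α+1)/2)·x²·(1+x₀)^(-(α+2)). -/
open Real Set

/-- Uniform quadratic upper bound from the Lagrange remainder: for `α ∈ (0,1]`,
`x₀ ∈ (-1, 0]`, and every `x ≥ x₀`,
`(1+x)^(-α) ≤ 1 - α·x + (α(α+1)/2)·x²·(1+x₀)^(-(α+2))`. -/
theorem one_add_rpow_neg_le_quadratic (α x₀ : ℝ) (hα0 : 0 < α) (hα1 : α ≤ 1)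
    (hx₀ : x₀ ∈ Set.Ioc (-1 : ℝ) 0) :
    ∀ x : ℝ, x₀ ≤ x →
      (1 + x) ^ (-α) ≤
        1 - α * x + (α * (α + 1) / 2) * x ^ 2 * (1 + x₀) ^ (-(α + 2)) := by
  obtain ⟨hx₀1, hx₀0⟩ := hx₀
  intro x hx
  have h1x₀ : (0:ℝ) < 1 + x₀ := by linarith
  set C : ℝ := (1 + x₀) ^ (-(α + 2)) with hC
  set f : ℝ → ℝ := fun t => 1 - α * t + (α * (α + 1) / 2) * t ^ 2 * C - (1 + t) ^ (-α)
    with hfdef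
  set g : ℝ → ℝ := fun t => -α + α * (α + 1) * t * C + α * (1 + t) ^ (-α - 1) with hgdef
  -- derivative of f is g
  have hfd : ∀ t : ℝ, -1 < t → HasDerivAt f (g t) t := by
    intro t ht
    have h1t : (0:ℝ) < 1 + t := by linarith
    have h1 : HasDerivAt (fun t : ℝ => (1 + t) ^ (-α)) (-α * (1 + t) ^ (-α - 1)) t := by
      have := (Real.hasDerivAt_rpow_const (p := -α) (x := 1 + t)
        (Or.inl h1t.ne')).comp t ((hasDerivAt_id t).const_add 1)
      simpa [Function.comp_def] using this
    have h2 : HasDerivAt (fun t : ℝ => 1 - α * t + (α * (α + 1) / 2) * t ^ 2 * C)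
        (-α + α * (α + 1) * t * C) t := by
      have := (((hasDerivAt_id t).const_mul α).const_sub 1).add
        (((hasDerivAt_pow 2 t).const_mul (α * (α + 1) / 2)).mul_const C)
      refine this.congr_deriv ?_
      ring
    have := h2.sub h1
    refine this.congr_deriv ?_
    simp only [hgdef]
    ring
  -- derivative of g
  have hgd : ∀ t : ℝ, -1 < t →
      HasDerivAt g (α * (α + 1) * C - α * (α + 1) * (1 + t) ^ (-α - 2)) t := by
    intro t ht
    have h1t : (0:ℝ) < 1 + t := by linarith
    have h1 : HasDerivAt (fun t : ℝ => (1 + t) ^ (-α - 1)) ((-α - 1) * (1 + t) ^ (-α - 2)) t := by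
      have := (Real.hasDerivAt_rpow_const (p := -α - 1) (x := 1 + t)
        (Or.inl h1t.ne')).comp t ((hasDerivAt_id t).const_add 1)
      have h' : -α - 1 - 1 = -α - 2 := by ring
      simpa [h', Function.comp_def] using this
    have h2 : HasDerivAt (fun t : ℝ => -α + α * (α + 1) * t * C) (α * (α + 1) * C) t := by
      have := (((hasDerivAt_id t).const_mul (α * (α + 1))).mul_const C).const_add (-α)
      refine this.congr_deriv ?_
      ring
    have := h2.add (h1.const_mul α)
    refine this.congr_deriv ?_
    ring
  -- g is monotone on Ici x₀
  have hgmono : MonotoneOn g (Set.Ici x₀) := by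
    apply monotoneOn_of_deriv_nonneg (convex_Ici x₀)
    · intro t ht
      exact (hgd t (lt_of_lt_of_le hx₀1 ht)).continuousAt.continuousWithinAt
    · intro t ht
      rw [interior_Ici] at ht
      exact (hgd t (hx₀1.trans ht)).differentiableAt.differentiableWithinAt
    · intro t ht
      rw [interior_Ici] at ht
      rw [(hgd t (hx₀1.trans ht)).deriv]
      have hle : (1 + t) ^ (-α - 2) ≤ (1 + x₀) ^ (-α - 2) := by
        apply Real.rpow_le_rpow_of_nonpos h1x₀ (by linarith [show x₀ < t from ht]) (by linarith)
      have hCeq : C = (1 + x₀) ^ (-α - 2) := by rw [hC]; ring_nf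
      nlinarith [mul_pos hα0 (by linarith : (0:ℝ) < α + 1)]
  have hg0 : g 0 = 0 := by
    simp [hgdef, Real.one_rpow]
  have hf0 : f 0 = 0 := by
    simp [hfdef, Real.one_rpow]
  -- two cases
  have key : 0 ≤ f x := by
    rcases le_or_gt 0 x with hx0 | hx0
    · -- f monotone on Ici 0
      have hmono : MonotoneOn f (Set.Ici 0) := by
        apply monotoneOn_of_deriv_nonneg (convex_Ici 0)
        · intro t ht
          exact (hfd t (by linarith [mem_Ici.mp ht])).continuousAt.continuousWithinAt
        · intro t ht
          rw [interior_Ici] at ht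
          have ht' : 0 < t := ht
          exact (hfd t (by linarith)).differentiableAt.differentiableWithinAt
        · intro t ht
          rw [interior_Ici] at ht
          have ht' : 0 < t := ht
          rw [(hfd t (by linarith)).deriv]
          have h0m : (0:ℝ) ∈ Set.Ici x₀ := Set.mem_Ici.mpr hx₀0
          have htm : t ∈ Set.Ici x₀ := Set.mem_Ici.mpr (by linarith)
          have := hgmono h0m htm ht'.le
          rw [hg0] at this
          exact this
      have := hmono (Set.mem_Ici.mpr le_rfl) (Set.mem_Ici.mpr hx0) hx0
      rwa [hf0] at this
    · -- f antitone on Icc x₀ 0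
      have hanti : AntitoneOn f (Set.Icc x₀ 0) := by
        apply antitoneOn_of_deriv_nonpos (convex_Icc x₀ 0)
        · intro t ht
          exact (hfd t (by linarith [ht.1])).continuousAt.continuousWithinAt
        · intro t ht
          rw [interior_Icc] at ht
          exact (hfd t (by linarith [ht.1])).differentiableAt.differentiableWithinAt
        · intro t ht
          rw [interior_Icc] at ht
          rw [(hfd t (by linarith [ht.1])).deriv]
          have htm : t ∈ Set.Ici x₀ := Set.mem_Ici.mpr ht.1.le
          have h0m : (0:ℝ) ∈ Set.Ici x₀ := Set.mem_Ici.mpr hx₀0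
          have := hgmono htm h0m ht.2.le
          rw [hg0] at this
          exact this
      have := hanti (Set.mem_Icc.mpr ⟨hx, hx0.le⟩) (Set.mem_Icc.mpr ⟨hx₀0, le_rfl⟩) hx0.le
      rwa [hf0] at this
  simp only [hfdef] at key
  linarith
end

section
/- Let n ≥ 1, let A be an n×n real symmetric matrix with nonnegative entries and zero diagonal, let β ≥ 0 and α ∈ [0,1], and set Â = A + β·I and d_u = Σ_v A_{uv}; assume d_v ≥ 1 for every node v. Let Z ∈ ℝ^{n×p}, and let S be the symmetrized convolution operator S_{uv} = Â_{uv}/((d_u+β)^α (d_v+β)^α). Then for every node u, the Euclidean norm of the u-th row of SZ satisfies ‖(SZ)_u‖₂ ≤ ‖Z‖_{2,∞} · ( (d_u+β)^{1-2α} - α·Δ̄_u·(d_u+β)^{-2α} + (α(α+1)M/2)·Δ̄²_u·(d_u+β)^{-1-2α} ), where Δ̄_u = Σ_v Â_{uv}(d_v - d_u)/(d_u+β), Δ̄²_u = Σ_v Â_{uv}(d_v - d_u)²/(d_u+β), M = ((d_max+β)/(1+β))^{α+2}, d_max = max_v d_v, and ‖Z‖_{2,∞} = max_v ‖Z_v‖₂.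 -/
open Real Finset

private lemma L1 (m q : ℝ) (hm : 0 < m) (hq : 0 ≤ q) {a b : ℝ} (hma : m ≤ a) (hab : a ≤ b) :
    a ^ (-q) - b ^ (-q) ≤ q * m ^ (-q - 1) * (b - a) := by
  set G : ℝ → ℝ := fun t => q * m ^ (-q - 1) * t + t ^ (-q) with hG
  have hderiv : ∀ t : ℝ, 0 < t → HasDerivAt G (q * m ^ (-q - 1) * 1 + -q * t ^ (-q - 1)) t := by
    intro t ht
    exact ((hasDerivAt_id t).const_mul (q * m ^ (-q - 1))).add
      (Real.hasDerivAt_rpow_const (Or.inl ht.ne') (p := -q))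
  have hmono : MonotoneOn G (Set.Ici m) := by
    apply monotoneOn_of_deriv_nonneg (convex_Ici m)
    · intro t ht
      exact (hderiv t (lt_of_lt_of_le hm ht)).continuousAt.continuousWithinAt
    · intro t ht
      rw [interior_Ici] at ht
      exact (hderiv t (hm.trans ht)).differentiableAt.differentiableWithinAt
    · intro t ht
      rw [interior_Ici] at ht
      rw [(hderiv t (hm.trans ht)).deriv]
      have h1 : t ^ (-q - 1) ≤ m ^ (-q - 1) :=
        Real.rpow_le_rpow_of_nonpos hm ht.le (by linarith)
      nlinarith [Real.rpow_nonneg (le_of_lt (hm.trans ht)) (-q - 1)]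
  have h := hmono (Set.mem_Ici.2 hma) (Set.mem_Ici.2 (hma.trans hab)) hab
  simp only [hG] at h
  linarith

private lemma key (m α : ℝ) (hm : 0 < m) (hα : 0 ≤ α) {x y : ℝ} (hx : m ≤ x) (hy : m ≤ y) :
    x ^ (-α) ≤ y ^ (-α) + (-α * y ^ (-α - 1)) * (x - y)
      + (α * (α + 1) / 2 * m ^ (-α - 2)) * (x - y) ^ 2 := by
  set C : ℝ := α * (α + 1) / 2 * m ^ (-α - 2) with hC
  set c1 : ℝ := -α * y ^ (-α - 1) with hc1
  set F : ℝ → ℝ := fun t => y ^ (-α) + c1 * (t - y) + C * (t - y) ^ 2 - t ^ (-α) with hF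
  have hderiv : ∀ t : ℝ, 0 < t →
      HasDerivAt F (0 + c1 * 1 + C * (2 * (t - y)) - -α * t ^ (-α - 1)) t := by
    intro t ht
    have h1 : HasDerivAt (fun t : ℝ => t - y) 1 t := (hasDerivAt_id t).sub_const y
    have h2 : HasDerivAt (fun t : ℝ => (t - y) ^ 2) (2 * (t - y)) t := by
      have := h1.pow 2
      exact (h1.fun_pow' 2).congr_deriv (by simp [Finset.sum_range_succ]; ring)
    exact (((hasDerivAt_const t (y ^ (-α))).add (h1.const_mul c1)).add (h2.const_mul C)).sub
      (Real.hasDerivAt_rpow_const (Or.inl ht.ne') (p := -α))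
  have hFy : F y = 0 := by simp [hF]
  have hgoal : 0 ≤ F x := by
    rcases le_total y x with hxy | hxy
    · have hmono : MonotoneOn F (Set.Icc y x) := by
        apply monotoneOn_of_deriv_nonneg (convex_Icc y x)
        · intro t ht
          exact (hderiv t (lt_of_lt_of_le (hm.trans_le hy) ht.1)).continuousAt.continuousWithinAt
        · intro t ht
          rw [interior_Icc] at ht
          exact (hderiv t (lt_of_lt_of_le (hm.trans_le hy) ht.1.le)).differentiableAt.differentiableWithinAt
        · intro t ht
          rw [interior_Icc] at ht
          rw [(hderiv t (lt_of_lt_of_le (hm.trans_le hy) ht.1.le)).deriv]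
          have hl := L1 m (α + 1) hm (by linarith) hy ht.1.le
          rw [show -(α + 1) = -α - 1 by ring, show -α - 1 - 1 = -α - 2 by ring] at hl
          have : α * (y ^ (-α - 1) - t ^ (-α - 1)) ≤ α * ((α + 1) * m ^ (-α - 2) * (t - y)) :=
            mul_le_mul_of_nonneg_left hl hα
          simp only [hc1, hC]
          nlinarith
      rw [← hFy]
      exact hmono (Set.left_mem_Icc.2 hxy) (Set.right_mem_Icc.2 hxy) hxy
    · have hanti : AntitoneOn F (Set.Icc x y) := by
        apply antitoneOn_of_deriv_nonpos (convex_Icc x y)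
        · intro t ht
          exact (hderiv t (lt_of_lt_of_le (hm.trans_le hx) ht.1)).continuousAt.continuousWithinAt
        · intro t ht
          rw [interior_Icc] at ht
          exact (hderiv t (lt_of_lt_of_le (hm.trans_le hx) ht.1.le)).differentiableAt.differentiableWithinAt
        · intro t ht
          rw [interior_Icc] at ht
          rw [(hderiv t (lt_of_lt_of_le (hm.trans_le hx) ht.1.le)).deriv]
          have hl := L1 m (α + 1) hm (by linarith) (hx.trans ht.1.le) ht.2.le
          rw [show -(α + 1) = -α - 1 by ring, show -α - 1 - 1 = -α - 2 by ring] at hl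
          have : α * (t ^ (-α - 1) - y ^ (-α - 1)) ≤ α * ((α + 1) * m ^ (-α - 2) * (y - t)) :=
            mul_le_mul_of_nonneg_left hl hα
          simp only [hc1, hC]
          nlinarith
      rw [← hFy]
      exact hanti (Set.left_mem_Icc.2 hxy) (Set.right_mem_Icc.2 hxy) hxy
  simp only [hF] at hgoal
  linarith


/-- Lemma 3.1: row-norm bound for the symmetrized graph convolution.  For a weighted
adjacency matrix `A` (symmetric, nonnegative, zero diagonal) with degrees `d_v ≥ 1`,
`Â = A + β I`, and `S_{uv} = Â_{uv}/((d_u+β)^α (d_v+β)^α)`, the Euclidean norm of each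
row of `S Z` is at most
`‖Z‖_{2,∞} ((d_u+β)^{1-2α} - α Δ̄_u (d_u+β)^{-2α} + (α(α+1)M/2) Δ̄²_u (d_u+β)^{-1-2α})`. -/
theorem sym_conv_row_norm_bound (n p : ℕ) (hn : 1 ≤ n)
    (A : Matrix (Fin n) (Fin n) ℝ) (hA_symm : A.IsSymm)
    (hA_nonneg : ∀ u v, 0 ≤ A u v) (hA_diag : ∀ u, A u u = 0)
    (β α : ℝ) (hβ : 0 ≤ β) (hα : α ∈ Set.Icc (0 : ℝ) 1)
    (d : Fin n → ℝ) (hd : ∀ u, d u = ∑ v, A u v) (hd1 : ∀ v, 1 ≤ d v)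
    (Ahat : Matrix (Fin n) (Fin n) ℝ)
    (hAhat : Ahat = A + β • (1 : Matrix (Fin n) (Fin n) ℝ))
    (S : Matrix (Fin n) (Fin n) ℝ)
    (hS : ∀ u v, S u v = Ahat u v / ((d u + β) ^ α * (d v + β) ^ α))
    (Z : Matrix (Fin n) (Fin p) ℝ)
    (dmax : ℝ) (hdmax : IsGreatest (Set.range d) dmax)
    (M : ℝ) (hM : M = ((dmax + β) / (1 + β)) ^ (α + 2))
    (Znorm : ℝ)
    (hZnorm : IsGreatest (Set.range fun v => Real.sqrt (∑ j, (Z v j) ^ 2)) Znorm)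
    (Δ₁ Δ₂ : Fin n → ℝ)
    (hΔ₁ : ∀ u, Δ₁ u = (∑ v, Ahat u v * (d v - d u)) / (d u + β))
    (hΔ₂ : ∀ u, Δ₂ u = (∑ v, Ahat u v * (d v - d u) ^ 2) / (d u + β)) :
    ∀ u : Fin n,
      Real.sqrt (∑ j, ((S * Z) u j) ^ 2) ≤
        Znorm * ((d u + β) ^ (1 - 2 * α) - α * Δ₁ u * (d u + β) ^ (-(2 * α)) +
          (α * (α + 1) * M / 2) * Δ₂ u * (d u + β) ^ (-(1 + 2 * α))) := by
  obtain ⟨hα0, hα1⟩ := hα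
  intro u
  have hm0 : (0:ℝ) < 1 + β := by linarith
  have hy1 : 1 + β ≤ d u + β := by have := hd1 u; linarith
  have hy0 : (0:ℝ) < d u + β := lt_of_lt_of_le hm0 hy1
  have hx1 : ∀ v, 1 + β ≤ d v + β := fun v => by have := hd1 v; linarith
  have hx0 : ∀ v, (0:ℝ) < d v + β := fun v => lt_of_lt_of_le hm0 (hx1 v)
  have hAh : ∀ v w, Ahat v w = A v w + (if v = w then β else 0) := by
    intro v w
    rw [hAhat]
    simp [Matrix.add_apply, Matrix.smul_apply, Matrix.one_apply, mul_ite]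
  have hAhat_nonneg : ∀ v w, 0 ≤ Ahat v w := by
    intro v w
    rw [hAh]
    have := hA_nonneg v w
    split_ifs <;> linarith
  have hrowsum : ∑ v, Ahat u v = d u + β := by
    simp only [hAh, Finset.sum_add_distrib, Finset.sum_ite_eq, Finset.mem_univ, if_true]
    rw [← hd u]
  have hS_nonneg : ∀ v, 0 ≤ S u v := fun v => by
    rw [hS]
    exact div_nonneg (hAhat_nonneg u v)
      (mul_nonneg (Real.rpow_nonneg hy0.le α) (Real.rpow_nonneg (hx0 v).le α))
  have hZnorm_nonneg : 0 ≤ Znorm := by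
    obtain ⟨v, hv⟩ := hZnorm.1
    rw [← hv]; exact Real.sqrt_nonneg _
  have hZle : ∀ v, Real.sqrt (∑ j, (Z v j) ^ 2) ≤ Znorm := fun v => hZnorm.2 ⟨v, rfl⟩
  -- Step 1: row norm bound by Znorm * row sum of S
  have step1 : Real.sqrt (∑ j, ((S * Z) u j) ^ 2) ≤ Znorm * ∑ v, S u v := by
    set f : Fin n → EuclideanSpace ℝ (Fin p) := fun v => WithLp.toLp 2 (fun j => Z v j) with hf
    have hnf : ∀ v, ‖f v‖ = Real.sqrt (∑ j, (Z v j) ^ 2) := by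
      intro v
      rw [EuclideanSpace.norm_eq]
      simp [hf, Real.norm_eq_abs, sq_abs]
    have heq : Real.sqrt (∑ j, ((S * Z) u j) ^ 2) = ‖∑ v, S u v • f v‖ := by
      rw [EuclideanSpace.norm_eq]
      congr 1
      refine Finset.sum_congr rfl fun j _ => ?_
      rw [Matrix.mul_apply]
      have hap : (∑ v, S u v • f v) j = ∑ v, (S u v • f v) j :=
        (congrFun (WithLp.ofLp_sum _ _ _ _) j).trans (Finset.sum_apply j Finset.univ _)
      rw [hap, Real.norm_eq_abs, sq_abs]
      rfl
    rw [heq]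
    calc ‖∑ v, S u v • f v‖ ≤ ∑ v, ‖S u v • f v‖ := norm_sum_le _ _
      _ = ∑ v, S u v * ‖f v‖ := by
          refine Finset.sum_congr rfl fun v _ => ?_
          rw [norm_smul, Real.norm_eq_abs, abs_of_nonneg (hS_nonneg v)]
      _ ≤ ∑ v, S u v * Znorm := by
          refine Finset.sum_le_sum fun v _ => ?_
          exact mul_le_mul_of_nonneg_left (by rw [hnf]; exact hZle v) (hS_nonneg v)
      _ = Znorm * ∑ v, S u v := by rw [← Finset.sum_mul]; ring
  -- Step 2: scalar bound on the row sum of S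
  set C0 : ℝ := α * (α + 1) / 2 * (1 + β) ^ (-α - 2) with hC0
  have hkeyv : ∀ v, (d v + β) ^ (-α) ≤ (d u + β) ^ (-α)
      + (-α * (d u + β) ^ (-α - 1)) * (d v - d u) + C0 * (d v - d u) ^ 2 := by
    intro v
    have h := key (1 + β) α hm0 hα0 (hx1 v) hy1
    rw [show d v + β - (d u + β) = d v - d u by ring] at h
    exact h
  have hΔ₂0 : 0 ≤ Δ₂ u := by
    rw [hΔ₂]
    exact div_nonneg (Finset.sum_nonneg fun v _ =>
      mul_nonneg (hAhat_nonneg u v) (sq_nonneg _)) hy0.le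
  have hyd : d u + β ≤ dmax + β := by
    have := hdmax.2 (Set.mem_range_self u); linarith
  have hsum_le : ∑ v, S u v ≤ (d u + β) ^ (1 - 2 * α) - α * Δ₁ u * (d u + β) ^ (-(2 * α)) +
      (α * (α + 1) * M / 2) * Δ₂ u * (d u + β) ^ (-(1 + 2 * α)) := by
    have e1 : ∑ v, Ahat u v * (d v - d u) = Δ₁ u * (d u + β) := by
      rw [hΔ₁ u]; field_simp
    have e2 : ∑ v, Ahat u v * (d v - d u) ^ 2 = Δ₂ u * (d u + β) := by
      rw [hΔ₂ u]; field_simp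
    have hSval : ∀ v, S u v = (d u + β) ^ (-α) * (Ahat u v * (d v + β) ^ (-α)) := by
      intro v
      rw [hS u v, Real.rpow_neg hy0.le, Real.rpow_neg (hx0 v).le, div_eq_mul_inv, mul_inv]
      ring
    have r1 : (d u + β) ^ (-α) * (d u + β) ^ (-α) * (d u + β) = (d u + β) ^ (1 - 2 * α) := by
      rw [show (1 - 2 * α) = -α + (-α + 1) by ring, Real.rpow_add hy0, Real.rpow_add hy0,
        Real.rpow_one]
      ring
    have r2 : (d u + β) ^ (-α) * (d u + β) ^ (-α - 1) * (d u + β) = (d u + β) ^ (-(2 * α)) := by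
      rw [show (-(2 * α)) = -α + ((-α - 1) + 1) by ring, Real.rpow_add hy0, Real.rpow_add hy0,
        Real.rpow_one]
      ring
    have r3 : (d u + β) ^ (-α) * (d u + β) = (d u + β) ^ (1 - α) := by
      rw [show (1 - α) = -α + 1 by ring, Real.rpow_add hy0, Real.rpow_one]
    have hthird : C0 * Δ₂ u * (d u + β) ^ (1 - α) ≤
        (α * (α + 1) * M / 2) * Δ₂ u * (d u + β) ^ (-(1 + 2 * α)) := by
      have hMdef : M = (dmax + β) ^ (α + 2) * (1 + β) ^ (-α - 2) := by
        rw [hM, Real.div_rpow (by linarith) hm0.le, div_eq_mul_inv,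
          ← Real.rpow_neg hm0.le, show -(α + 2) = -α - 2 by ring]
      have hsplit : (d u + β) ^ (1 - α) = (d u + β) ^ (α + 2) * (d u + β) ^ (-(1 + 2 * α)) := by
        rw [← Real.rpow_add hy0]; congr 1; ring
      have hpow : (d u + β) ^ (α + 2) ≤ (dmax + β) ^ (α + 2) :=
        Real.rpow_le_rpow hy0.le hyd (by linarith)
      have hcore : C0 * (d u + β) ^ (1 - α) ≤ (α * (α + 1) * M / 2) * (d u + β) ^ (-(1 + 2 * α)) := by
        rw [hC0, hMdef, hsplit]
        have h1 : 0 ≤ (1 + β) ^ (-α - 2) := Real.rpow_nonneg hm0.le _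
        have h2 : 0 ≤ (d u + β) ^ (-(1 + 2 * α)) := Real.rpow_nonneg hy0.le _
        have h3 : 0 ≤ α * (α + 1) / 2 := by nlinarith
        nlinarith [mul_nonneg (mul_nonneg h3 h1) h2]
      calc C0 * Δ₂ u * (d u + β) ^ (1 - α) = Δ₂ u * (C0 * (d u + β) ^ (1 - α)) := by ring
        _ ≤ Δ₂ u * ((α * (α + 1) * M / 2) * (d u + β) ^ (-(1 + 2 * α))) :=
            mul_le_mul_of_nonneg_left hcore hΔ₂0
        _ = (α * (α + 1) * M / 2) * Δ₂ u * (d u + β) ^ (-(1 + 2 * α)) := by ring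
    calc ∑ v, S u v = (d u + β) ^ (-α) * ∑ v, Ahat u v * (d v + β) ^ (-α) := by
          rw [Finset.mul_sum]; exact Finset.sum_congr rfl fun v _ => hSval v
      _ ≤ (d u + β) ^ (-α) * ∑ v, Ahat u v * ((d u + β) ^ (-α)
            + (-α * (d u + β) ^ (-α - 1)) * (d v - d u) + C0 * (d v - d u) ^ 2) := by
          refine mul_le_mul_of_nonneg_left (Finset.sum_le_sum fun v _ => ?_)
            (Real.rpow_nonneg hy0.le _)
          exact mul_le_mul_of_nonneg_left (hkeyv v) (hAhat_nonneg u v)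
      _ = (d u + β) ^ (-α) * ((d u + β) ^ (-α) * (d u + β)
            + (-α * (d u + β) ^ (-α - 1)) * (Δ₁ u * (d u + β)) + C0 * (Δ₂ u * (d u + β))) := by
          congr 1
          rw [Finset.sum_congr rfl (fun v _ => show Ahat u v * ((d u + β) ^ (-α)
              + (-α * (d u + β) ^ (-α - 1)) * (d v - d u) + C0 * (d v - d u) ^ 2)
            = (d u + β) ^ (-α) * Ahat u v
              + (-α * (d u + β) ^ (-α - 1)) * (Ahat u v * (d v - d u))
              + C0 * (Ahat u v * (d v - d u) ^ 2) from by ring),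
            Finset.sum_add_distrib, Finset.sum_add_distrib, ← Finset.mul_sum, ← Finset.mul_sum,
            ← Finset.mul_sum, hrowsum, e1, e2]
      _ = (d u + β) ^ (1 - 2 * α) - α * Δ₁ u * (d u + β) ^ (-(2 * α))
            + C0 * Δ₂ u * (d u + β) ^ (1 - α) := by
          rw [← r1, ← r2, ← r3]; ring
      _ ≤ _ := by linarith
  calc Real.sqrt (∑ j, ((S * Z) u j) ^ 2) ≤ Znorm * ∑ v, S u v := step1
    _ ≤ _ := mul_le_mul_of_nonneg_left hsum_le hZnorm_nonneg
end

section
/- Let n ≥ 1, let A be an n×n real symmetric matrix with nonnegative entries and zero diagonal, let β ≥ 0 and α ∈ [0,1], and set Â = A + β·I and d_u = Σ_v A_{uv}; assume d_v ≥ 1 for every node v. Let Z ∈ ℝ^{n×p} have all entries nonnegative, and let S be the symmetrized convolution operator S_{uv} = Â_{uv}/((d_u+β)^α (d_v+β)^α). Then every entry of SZ is nonnegative, and for every node u and coordinate j, (SZ)_{uj} ≤ ‖Z‖_∞ · ( (d_u+β)^{1-2α} - α·Δ̄_u·(d_u+β)^{-2α} + (α(α+1)M/2)·Δ̄²_u·(d_u+β)^{-1-2α}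 ), where Δ̄_u = Σ_v Â_{uv}(d_v - d_u)/(d_u+β), Δ̄²_u = Σ_v Â_{uv}(d_v - d_u)²/(d_u+β), M = ((d_max+β)/(1+β))^{α+2}, d_max = max_v d_v, and ‖Z‖_∞ = max_{v,j} Z_{vj}. -/
open Real Finset

lemma taylor_rpow_bound (c a x α : ℝ) (hc : 0 < c) (hca : c ≤ a) (hcx : c ≤ x)
    (hα : 0 ≤ α) :
    x ^ (-α) ≤ a ^ (-α) - (α * a ^ (-α-1)) * (x - a) +
      (α * (α+1) / 2 * c ^ (-α-2)) * (x - a)^2 := by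
  have ha : 0 < a := hc.trans_le hca
  set K := α * (α+1) / 2 * c ^ (-α-2) with hK
  have hK0 : 0 ≤ K := by
    apply mul_nonneg (by positivity) (le_of_lt (Real.rpow_pos_of_pos hc _))
  set ψ : ℝ → ℝ := fun y => -(α * a ^ (-α-1)) + 2*K*(y-a) + α * y ^ (-α-1) with hψdef
  set φ : ℝ → ℝ := fun y => a ^ (-α) - (α * a ^ (-α-1)) * (y-a) + K*(y-a)^2 - y ^ (-α)
    with hφdef
  -- derivatives
  have hφ' : ∀ y : ℝ, 0 < y → HasDerivAt φ (ψ y) y := by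
    intro y hy
    have hid : HasDerivAt (fun z : ℝ => z - a) 1 y := (hasDerivAt_id y).sub_const a
    have h2 : HasDerivAt (fun z : ℝ => (α * a ^ (-α-1)) * (z-a)) (α * a ^ (-α-1)) y := by
      simpa using hid.const_mul (α * a ^ (-α-1))
    have h3 : HasDerivAt (fun z : ℝ => K*(z-a)^2) (K*(2*(y-a))) y := by
      have := (hid.pow 2).const_mul K
      simpa [mul_comm, mul_assoc, mul_left_comm] using this
    have h4 : HasDerivAt (fun z : ℝ => z ^ (-α)) (-α * y ^ (-α-1)) y :=
      Real.hasDerivAt_rpow_const (Or.inl hy.ne')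
    have := (((hasDerivAt_const y (a ^ (-α))).sub h2).add h3).sub h4
    refine this.congr_deriv ?_
    simp [hψdef]; ring
  have hψ' : ∀ y : ℝ, 0 < y → HasDerivAt ψ (2*K - α*(α+1) * y ^ (-α-2)) y := by
    intro y hy
    have hid : HasDerivAt (fun z : ℝ => z - a) 1 y := (hasDerivAt_id y).sub_const a
    have h2 : HasDerivAt (fun z : ℝ => 2*K*(z-a)) (2*K) y := by
      simpa using hid.const_mul (2*K)
    have h4 : HasDerivAt (fun z : ℝ => z ^ (-α-1)) ((-α-1) * y ^ (-α-1-1)) y :=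
      Real.hasDerivAt_rpow_const (Or.inl hy.ne')
    have h5 := h4.const_mul α
    have := ((hasDerivAt_const y (-(α * a ^ (-α-1)))).add h2).add h5
    refine this.congr_deriv ?_
    have e : -α-1-1 = -α-2 := by ring
    rw [e]; ring
  have hcpos : ∀ y ∈ Set.Ici c, (0:ℝ) < y := fun y hy => hc.trans_le hy
  -- ψ is monotone on [c, ∞)
  have hψmono : MonotoneOn ψ (Set.Ici c) := by
    apply monotoneOn_of_deriv_nonneg (convex_Ici c)
    · intro y hy
      exact ((hψ' y (hcpos y hy)).continuousAt).continuousWithinAt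
    · intro y hy
      rw [interior_Ici] at hy
      exact ((hψ' y (hc.trans hy)).differentiableAt).differentiableWithinAt
    · intro y hy
      rw [interior_Ici] at hy
      rw [(hψ' y (hc.trans hy)).deriv]
      have hyc : c ≤ y := le_of_lt hy
      have h1 : y ^ (-α-2) ≤ c ^ (-α-2) :=
        Real.rpow_le_rpow_of_nonpos hc hyc (by linarith)
      have h2 : α*(α+1) * y ^ (-α-2) ≤ α*(α+1) * c ^ (-α-2) :=
        mul_le_mul_of_nonneg_left h1 (by positivity)
      have : 2*K = α*(α+1) * c ^ (-α-2) := by rw [hK]; ring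
      linarith
  have hψa : ψ a = 0 := by simp [hψdef]
  -- φ is antitone on [c,a] and monotone on [a,∞)
  have hφx : 0 ≤ φ x := by
    rcases le_total x a with hxa | hax
    · have hanti : AntitoneOn φ (Set.Icc c a) := by
        apply antitoneOn_of_deriv_nonpos (convex_Icc c a)
        · intro y hy
          exact ((hφ' y (hcpos y hy.1)).continuousAt).continuousWithinAt
        · intro y hy
          rw [interior_Icc] at hy
          exact ((hφ' y (hc.trans hy.1)).differentiableAt).differentiableWithinAt
        · intro y hy
          rw [interior_Icc] at hy
          rw [(hφ' y (hc.trans hy.1)).deriv]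
          have := hψmono (Set.mem_Ici.2 (le_of_lt hy.1)) (Set.mem_Ici.2 hca) (le_of_lt hy.2)
          linarith [hψa ▸ this]
      have := hanti (Set.mem_Icc.2 ⟨hcx, hxa⟩) (Set.mem_Icc.2 ⟨hca, le_refl a⟩) hxa
      have hφa : φ a = 0 := by simp [hφdef]
      linarith
    · have hmono : MonotoneOn φ (Set.Ici a) := by
        apply monotoneOn_of_deriv_nonneg (convex_Ici a)
        · intro y hy
          exact ((hφ' y (ha.trans_le hy)).continuousAt).continuousWithinAt
        · intro y hy
          rw [interior_Ici] at hy
          exact ((hφ' y (ha.trans hy)).differentiableAt).differentiableWithinAt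
        · intro y hy
          rw [interior_Ici] at hy
          rw [(hφ' y (ha.trans hy)).deriv]
          have := hψmono (Set.mem_Ici.2 hca) (Set.mem_Ici.2 (hca.trans (le_of_lt hy))) (le_of_lt hy)
          linarith [hψa ▸ this]
      have := hmono (Set.mem_Ici.2 (le_refl a)) (Set.mem_Ici.2 hax) hax
      have hφa : φ a = 0 := by simp [hφdef]
      linarith
  have : φ x = a ^ (-α) - (α * a ^ (-α-1)) * (x-a) + K*(x-a)^2 - x ^ (-α) := rfl
  rw [this] at hφx
  linarith

/-- Entrywise version of the row-norm bound for nonnegative features (e.g. ReLU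
outputs): every entry of `S Z` is nonnegative and bounded by
`‖Z‖_∞ ((d_u+β)^{1-2α} - α Δ̄_u (d_u+β)^{-2α} + (α(α+1)M/2) Δ̄²_u (d_u+β)^{-1-2α})`. -/
theorem sym_conv_entrywise_bound (n p : ℕ) (hn : 1 ≤ n)
    (A : Matrix (Fin n) (Fin n) ℝ) (hA_symm : A.IsSymm)
    (hA_nonneg : ∀ u v, 0 ≤ A u v) (hA_diag : ∀ u, A u u = 0)
    (β α : ℝ) (hβ : 0 ≤ β) (hα : α ∈ Set.Icc (0 : ℝ) 1)
    (d : Fin n → ℝ) (hd : ∀ u, d u = ∑ v, A u v) (hd1 : ∀ v, 1 ≤ d v)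
    (Ahat : Matrix (Fin n) (Fin n) ℝ)
    (hAhat : Ahat = A + β • (1 : Matrix (Fin n) (Fin n) ℝ))
    (S : Matrix (Fin n) (Fin n) ℝ)
    (hS : ∀ u v, S u v = Ahat u v / ((d u + β) ^ α * (d v + β) ^ α))
    (Z : Matrix (Fin n) (Fin p) ℝ) (hZ_nonneg : ∀ v j, 0 ≤ Z v j)
    (dmax : ℝ) (hdmax : IsGreatest (Set.range d) dmax)
    (M : ℝ) (hM : M = ((dmax + β) / (1 + β)) ^ (α + 2))
    (Zinf : ℝ)
    (hZinf : IsGreatest (Set.range fun vj : Fin n × Fin p => Z vj.1 vj.2) Zinf)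
    (Δ₁ Δ₂ : Fin n → ℝ)
    (hΔ₁ : ∀ u, Δ₁ u = (∑ v, Ahat u v * (d v - d u)) / (d u + β))
    (hΔ₂ : ∀ u, Δ₂ u = (∑ v, Ahat u v * (d v - d u) ^ 2) / (d u + β)) :
    ∀ (u : Fin n) (j : Fin p),
      0 ≤ (S * Z) u j ∧
      (S * Z) u j ≤
        Zinf * ((d u + β) ^ (1 - 2 * α) - α * Δ₁ u * (d u + β) ^ (-(2 * α)) +
          (α * (α + 1) * M / 2) * Δ₂ u * (d u + β) ^ (-(1 + 2 * α))) := by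
  obtain ⟨hα0, hα1⟩ := hα
  intro u j
  have hc : (0:ℝ) < 1 + β := by linarith
  have hdβ : ∀ v, 1 + β ≤ d v + β := fun v => by have := hd1 v; linarith
  have hdβ0 : ∀ v, (0:ℝ) < d v + β := fun v => lt_of_lt_of_le hc (hdβ v)
  have ha : (0:ℝ) < d u + β := hdβ0 u
  have hAhat_nn : ∀ v w, 0 ≤ Ahat v w := by
    intro v w
    simp only [hAhat, Matrix.add_apply, Matrix.smul_apply, Matrix.one_apply, smul_eq_mul]
    have := hA_nonneg v w
    split_ifs <;> nlinarith
  have hS_nn : ∀ v, 0 ≤ S u v := by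
    intro v
    rw [hS]
    exact div_nonneg (hAhat_nn u v)
      (mul_nonneg (Real.rpow_nonneg ha.le _) (Real.rpow_nonneg (hdβ0 v).le _))
  -- sum identities
  have hsum0 : ∑ v, Ahat u v = d u + β := by
    simp only [hAhat, Matrix.add_apply, Matrix.smul_apply, Matrix.one_apply, smul_eq_mul]
    rw [Finset.sum_add_distrib, ← hd u]
    simp [mul_ite]
  have hsum1 : ∑ v, Ahat u v * (d v - d u) = Δ₁ u * (d u + β) := by
    rw [hΔ₁ u, div_mul_cancel₀ _ (ne_of_gt ha)]
  have hsum2 : ∑ v, Ahat u v * (d v - d u) ^ 2 = Δ₂ u * (d u + β) := by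
    rw [hΔ₂ u, div_mul_cancel₀ _ (ne_of_gt ha)]
  -- nonnegativity
  have hentry : (S * Z) u j = ∑ v, S u v * Z v j := Matrix.mul_apply
  have hnonneg : 0 ≤ (S * Z) u j := by
    rw [hentry]
    exact Finset.sum_nonneg fun v _ => mul_nonneg (hS_nn v) (hZ_nonneg v j)
  refine ⟨hnonneg, ?_⟩
  obtain ⟨⟨v0, j0⟩, hv0⟩ := hZinf.1
  have hZinf0 : 0 ≤ Zinf := hv0 ▸ hZ_nonneg v0 j0
  have hZle : ∀ v (j' : Fin p), Z v j' ≤ Zinf := fun v j' => hZinf.2 ⟨(v, j'), rfl⟩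
  -- key: c^(-α-2) ≤ M * a^(-α-2)
  have hMkey : (1+β) ^ (-α-2) ≤ M * (d u + β) ^ (-α-2) := by
    have hdu_max : d u ≤ dmax := hdmax.2 ⟨u, rfl⟩
    have hadm : d u + β ≤ dmax + β := by linarith
    have h1 : ((d u + β) / (1+β)) ^ (α+2) ≤ M := by
      rw [hM]
      exact Real.rpow_le_rpow (by positivity) ((div_le_div_iff_of_pos_right hc).mpr hadm) (by linarith)
    have h2 : ((d u + β) / (1+β)) ^ (α+2) * (d u + β) ^ (-α-2) = (1+β) ^ (-α-2) := by
      rw [Real.div_rpow ha.le hc.le, div_mul_eq_mul_div, ← Real.rpow_add ha]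
      rw [show (α+2) + (-α-2) = 0 by ring, Real.rpow_zero]
      rw [show (-α-2 : ℝ) = -(α+2) by ring, Real.rpow_neg hc.le, one_div]
    calc (1+β) ^ (-α-2) = ((d u + β) / (1+β)) ^ (α+2) * (d u + β) ^ (-α-2) := h2.symm
      _ ≤ M * (d u + β) ^ (-α-2) :=
        mul_le_mul_of_nonneg_right h1 (Real.rpow_nonneg ha.le _)
  -- pointwise bound
  have hpt : ∀ v, Ahat u v * (d v + β) ^ (-α) ≤
      Ahat u v * ((d u + β) ^ (-α) - (α * (d u + β) ^ (-α-1)) * (d v - d u) +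
        (α*(α+1)/2 * M * (d u + β) ^ (-α-2)) * (d v - d u)^2) := by
    intro v
    refine mul_le_mul_of_nonneg_left ?_ (hAhat_nn u v)
    have ht := taylor_rpow_bound (1+β) (d u + β) (d v + β) α hc (hdβ u) (hdβ v) hα0
    rw [show d v + β - (d u + β) = d v - d u by ring] at ht
    have h3 : (α*(α+1)/2 * (1+β)^(-α-2)) * (d v - d u)^2 ≤
        (α*(α+1)/2 * M * (d u + β) ^ (-α-2)) * (d v - d u)^2 := by
      refine mul_le_mul_of_nonneg_right ?_ (sq_nonneg _)
      calc α*(α+1)/2 * (1+β)^(-α-2) ≤ α*(α+1)/2 * (M * (d u + β) ^ (-α-2)) :=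
            mul_le_mul_of_nonneg_left hMkey (by positivity)
        _ = α*(α+1)/2 * M * (d u + β) ^ (-α-2) := by ring
    linarith
  -- sum bound
  have hsum_bound : ∑ v, Ahat u v * (d v + β) ^ (-α) ≤
      (d u + β) ^ (-α) * (d u + β) - (α * (d u + β) ^ (-α-1)) * (Δ₁ u * (d u + β)) +
        (α*(α+1)/2 * M * (d u + β) ^ (-α-2)) * (Δ₂ u * (d u + β)) := by
    calc ∑ v, Ahat u v * (d v + β) ^ (-α)
        ≤ ∑ v, Ahat u v * ((d u + β) ^ (-α) - (α * (d u + β) ^ (-α-1)) * (d v - d u) +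
            (α*(α+1)/2 * M * (d u + β) ^ (-α-2)) * (d v - d u)^2) :=
          Finset.sum_le_sum fun v _ => hpt v
      _ = (d u + β) ^ (-α) * (∑ v, Ahat u v)
            - (α * (d u + β) ^ (-α-1)) * (∑ v, Ahat u v * (d v - d u))
            + (α*(α+1)/2 * M * (d u + β) ^ (-α-2)) * (∑ v, Ahat u v * (d v - d u)^2) := by
          rw [Finset.mul_sum, Finset.mul_sum, Finset.mul_sum, ← Finset.sum_sub_distrib,
            ← Finset.sum_add_distrib]
          exact Finset.sum_congr rfl fun v _ => by ring
      _ = _ := by rw [hsum0, hsum1, hsum2]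
  -- row sum of S
  have hSrow : ∑ v, S u v = (d u + β) ^ (-α) * ∑ v, Ahat u v * (d v + β) ^ (-α) := by
    rw [Finset.mul_sum]
    refine Finset.sum_congr rfl fun v _ => ?_
    rw [hS u v, Real.rpow_neg ha.le, Real.rpow_neg (hdβ0 v).le, div_eq_mul_inv, mul_inv]
    ring
  -- rpow arithmetic
  have q1 : (d u + β) ^ (-α) * (d u + β) ^ (-α) * (d u + β) = (d u + β) ^ (1 - 2*α) := by
    rw [← Real.rpow_add ha, ← Real.rpow_add_one (ne_of_gt ha)]
    congr 1; ring
  have q2 : (d u + β) ^ (-α) * (d u + β) ^ (-α-1) * (d u + β) = (d u + β) ^ (-(2*α)) := by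
    rw [← Real.rpow_add ha, ← Real.rpow_add_one (ne_of_gt ha)]
    congr 1; ring
  have q3 : (d u + β) ^ (-α) * (d u + β) ^ (-α-2) * (d u + β) = (d u + β) ^ (-(1+2*α)) := by
    rw [← Real.rpow_add ha, ← Real.rpow_add_one (ne_of_gt ha)]
    congr 1; ring
  calc (S * Z) u j = ∑ v, S u v * Z v j := hentry
    _ ≤ ∑ v, S u v * Zinf :=
        Finset.sum_le_sum fun v _ => mul_le_mul_of_nonneg_left (hZle v j) (hS_nn v)
    _ = Zinf * ∑ v, S u v := by rw [← Finset.sum_mul]; ring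
    _ ≤ Zinf * ((d u + β) ^ (1 - 2 * α) - α * Δ₁ u * (d u + β) ^ (-(2 * α)) +
          (α * (α + 1) * M / 2) * Δ₂ u * (d u + β) ^ (-(1 + 2 * α))) := by
        refine mul_le_mul_of_nonneg_left ?_ hZinf0
        rw [hSrow]
        calc (d u + β) ^ (-α) * ∑ v, Ahat u v * (d v + β) ^ (-α)
            ≤ (d u + β) ^ (-α) *
                ((d u + β) ^ (-α) * (d u + β)
                  - (α * (d u + β) ^ (-α-1)) * (Δ₁ u * (d u + β))
                  + (α*(α+1)/2 * M * (d u + β) ^ (-α-2)) * (Δ₂ u * (d u + β))) :=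
              mul_le_mul_of_nonneg_left hsum_bound (Real.rpow_nonneg ha.le _)
          _ = ((d u + β) ^ (-α) * (d u + β) ^ (-α) * (d u + β))
                - α * Δ₁ u * ((d u + β) ^ (-α) * (d u + β) ^ (-α-1) * (d u + β))
                + (α*(α+1)*M/2) * Δ₂ u *
                    ((d u + β) ^ (-α) * (d u + β) ^ (-α-2) * (d u + β)) := by ring
          _ = _ := by rw [q1, q2, q3]
end

section
/- Let n ≥ 1, let A be an n×n real symmetric matrix with all entries in [0,1] and zero diagonal, let β ∈ [0,1] and α ∈ [0,1], set Â = A + β·I and d_u = Σ_v A_{uv}, and assume d_v ≥ 1 for every node v. Then for every node u, (d_u+β)^{-2α} · Σ_v Â_{uv}² (d_v+β)^{-2α} ≤ (d_u+β)^{1-4α} + 2α·Δ̄ᵃᵇˢ_u·(d_u+β)^{-4α} + α(2α+1)·M·Δ̄²_u·(d_u+β)^{-1-4α}, where Δ̄ᵃᵇˢ_u = Σ_v Â_{uv}|d_v - d_u|/(d_u+β), Δ̄²_u = Σ_v Â_{uv}(d_v - d_u)²/(d_u+β), M = ((d_max+β)/(1+β))^{2α+2}, and d_max = max_v d_v. 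-/
open Real Finset

lemma taylor_lemA {c x y q : ℝ} (hc : 0 < c) (hq : 0 ≤ q) (hcy : c ≤ y) (hyx : y ≤ x) :
    y ^ (-q) - x ^ (-q) ≤ q * c ^ (-q - 1) * (x - y) := by
  set g : ℝ → ℝ := fun t => t ^ (-q) + q * c ^ (-q - 1) * t with hg
  have hD : ∀ t : ℝ, 0 < t → HasDerivAt g (-q * t ^ (-q - 1) + q * c ^ (-q - 1)) t := by
    intro t ht
    have h1 : HasDerivAt (fun t : ℝ => t ^ (-q)) (-q * t ^ (-q - 1)) t := by
      simpa using Real.hasDerivAt_rpow_const (p := -q) (Or.inl ht.ne')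
    have h2 : HasDerivAt (fun t : ℝ => q * c ^ (-q - 1) * t) (q * c ^ (-q - 1)) t := by
      simpa using (hasDerivAt_id t).const_mul (q * c ^ (-q - 1))
    exact h1.add h2
  have hmono : MonotoneOn g (Set.Icc c x) := by
    apply monotoneOn_of_deriv_nonneg (convex_Icc c x)
    · intro t ht
      exact (hD t (hc.trans_le ht.1)).continuousAt.continuousWithinAt
    · intro t ht
      have ht' := interior_subset ht
      exact ((hD t (hc.trans_le ht'.1)).differentiableAt).differentiableWithinAt
    · intro t ht
      have ht' : t ∈ Set.Icc c x := interior_subset ht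
      have htpos : 0 < t := hc.trans_le ht'.1
      rw [(hD t htpos).deriv]
      have hle : t ^ (-q - 1) ≤ c ^ (-q - 1) :=
        Real.rpow_le_rpow_of_nonpos hc ht'.1 (by linarith)
      nlinarith
  have hyI : y ∈ Set.Icc c x := ⟨hcy, hyx⟩
  have hxI : x ∈ Set.Icc c x := ⟨hcy.trans hyx, le_refl x⟩
  have := hmono hyI hxI hyx
  simp only [hg] at this
  nlinarith

lemma taylor_lemB {c x y p : ℝ} (hc : 0 < c) (hp : 0 ≤ p) (hcy : c ≤ y) (hyx : y ≤ x) :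
    y ^ (-p) ≤ x ^ (-p) + p * x ^ (-p - 1) * (x - y)
      + (p * (p + 1) / 2) * c ^ (-p - 2) * (x - y) ^ 2 := by
  have hcx : c ≤ x := hcy.trans hyx
  have hxpos : 0 < x := hc.trans_le hcx
  set K : ℝ := (p * (p + 1) / 2) * c ^ (-p - 2) with hK
  set h : ℝ → ℝ := fun t => t ^ (-p) + p * x ^ (-p - 1) * t - K * (x - t) ^ 2 with hh
  have hD : ∀ t : ℝ, 0 < t →
      HasDerivAt h (-p * t ^ (-p - 1) + p * x ^ (-p - 1) + 2 * K * (x - t)) t := by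
    intro t ht
    have h1 : HasDerivAt (fun t : ℝ => t ^ (-p)) (-p * t ^ (-p - 1)) t := by
      simpa using Real.hasDerivAt_rpow_const (p := -p) (Or.inl ht.ne')
    have h2 : HasDerivAt (fun t : ℝ => p * x ^ (-p - 1) * t) (p * x ^ (-p - 1)) t := by
      simpa using (hasDerivAt_id t).const_mul (p * x ^ (-p - 1))
    have h3 : HasDerivAt (fun t : ℝ => K * (x - t) ^ 2) (-(2 * K * (x - t))) t := by
      have hb : HasDerivAt (fun t : ℝ => (x - t) ^ 2) (2 * (x - t) ^ 1 * (-1)) t := by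
        exact (((hasDerivAt_id t).const_sub x)).pow 2
      have := hb.const_mul K
      exact this.congr_deriv (by ring)
    have := (h1.add h2).sub h3
    exact this.congr_deriv (by ring)
  have hmono : MonotoneOn h (Set.Icc c x) := by
    apply monotoneOn_of_deriv_nonneg (convex_Icc c x)
    · intro t ht
      exact (hD t (hc.trans_le ht.1)).continuousAt.continuousWithinAt
    · intro t ht
      have ht' := interior_subset ht
      exact ((hD t (hc.trans_le ht'.1)).differentiableAt).differentiableWithinAt
    · intro t ht
      have ht' : t ∈ Set.Icc c x := interior_subset ht
      have htpos : 0 < t := hc.trans_le ht'.1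
      rw [(hD t htpos).deriv]
      have hA := taylor_lemA (q := p + 1) hc (by linarith) ht'.1 ht'.2
      have e1 : -(p + 1) = -p - 1 := by ring
      have e2 : -p - 1 - 1 = -p - 2 := by ring
      rw [e1, e2] at hA
      have hKnn : 0 ≤ c ^ (-p - 2) := Real.rpow_nonneg hc.le _
      nlinarith
  have hyI : y ∈ Set.Icc c x := ⟨hcy, hyx⟩
  have hxI : x ∈ Set.Icc c x := ⟨hcx, le_refl x⟩
  have key := hmono hyI hxI hyx
  simp only [hh] at key
  nlinarith [key]

lemma taylor_lemC {c x y p : ℝ} (hc : 0 < c) (hp : 0 ≤ p) (hcx : c ≤ x) (hcy : c ≤ y) :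
    y ^ (-p) ≤ x ^ (-p) + p * x ^ (-p - 1) * |y - x|
      + (p * (p + 1) / 2) * c ^ (-p - 2) * (y - x) ^ 2 := by
  have hxpos : 0 < x := hc.trans_le hcx
  rcases le_total x y with hxy | hyx
  · have h1 : y ^ (-p) ≤ x ^ (-p) :=
      Real.rpow_le_rpow_of_nonpos hxpos hxy (by linarith)
    have h2 : 0 ≤ p * x ^ (-p - 1) * |y - x| := by positivity
    have h3 : 0 ≤ (p * (p + 1) / 2) * c ^ (-p - 2) * (y - x) ^ 2 := by positivity
    linarith
  · have hB := taylor_lemB hc hp hcy hyx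
    have habs : |y - x| = x - y := by
      rw [abs_of_nonpos (by linarith)]; ring
    have hsq : (y - x) ^ 2 = (x - y) ^ 2 := by ring
    rw [habs, hsq]
    exact hB

/-- Deterministic bound on the mean squared distance between the symmetrized-convolution
embeddings of structurally equivalent nodes: with entries of `A` in `[0,1]`,
`β ∈ [0,1]`, degrees `d_v ≥ 1`, for every node `u`,
`(d_u+β)^{-2α} Σ_v Â_{uv}² (d_v+β)^{-2α} ≤ (d_u+β)^{1-4α} + 2α Δ̄ᵃᵇˢ_u (d_u+β)^{-4α}
  + α(2α+1) M Δ̄²_u (d_u+β)^{-1-4α}`. -/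
theorem sym_conv_mean_sq_distance_bound (n : ℕ) (hn : 1 ≤ n)
    (A : Matrix (Fin n) (Fin n) ℝ) (hA_symm : A.IsSymm)
    (hA_mem : ∀ u v, A u v ∈ Set.Icc (0 : ℝ) 1) (hA_diag : ∀ u, A u u = 0)
    (β α : ℝ) (hβ : β ∈ Set.Icc (0 : ℝ) 1) (hα : α ∈ Set.Icc (0 : ℝ) 1)
    (d : Fin n → ℝ) (hd : ∀ u, d u = ∑ v, A u v) (hd1 : ∀ v, 1 ≤ d v)
    (Ahat : Matrix (Fin n) (Fin n) ℝ)
    (hAhat : Ahat = A + β • (1 : Matrix (Fin n) (Fin n) ℝ))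
    (dmax : ℝ) (hdmax : IsGreatest (Set.range d) dmax)
    (M : ℝ) (hM : M = ((dmax + β) / (1 + β)) ^ (2 * α + 2))
    (Δabs Δ₂ : Fin n → ℝ)
    (hΔabs : ∀ u, Δabs u = (∑ v, Ahat u v * |d v - d u|) / (d u + β))
    (hΔ₂ : ∀ u, Δ₂ u = (∑ v, Ahat u v * (d v - d u) ^ 2) / (d u + β)) :
    ∀ u : Fin n,
      (d u + β) ^ (-(2 * α)) * ∑ v, (Ahat u v) ^ 2 * (d v + β) ^ (-(2 * α)) ≤
        (d u + β) ^ (1 - 4 * α) + 2 * α * Δabs u * (d u + β) ^ (-(4 * α)) +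
          α * (2 * α + 1) * M * Δ₂ u * (d u + β) ^ (-(1 + 4 * α)) := by
  obtain ⟨hβ0, hβ1⟩ := hβ
  obtain ⟨hα0, hα1⟩ := hα
  intro u
  set c : ℝ := 1 + β with hcdef
  have hc : 0 < c := by linarith
  set x : ℝ := d u + β with hxdef
  have hcx : c ≤ x := by have := hd1 u; simp [hcdef, hxdef]; linarith
  have hxpos : 0 < x := hc.trans_le hcx
  -- entries of Ahat
  have hAhat_apply : ∀ v, Ahat u v = A u v + (if u = v then β else 0) := by
    intro v
    simp [hAhat, Matrix.add_apply, Matrix.smul_apply, Matrix.one_apply, mul_ite]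
  have hAhat_mem : ∀ v, 0 ≤ Ahat u v ∧ Ahat u v ≤ 1 := by
    intro v
    rw [hAhat_apply v]
    rcases eq_or_ne u v with h | h
    · subst h; simp [hA_diag u]; exact ⟨hβ0, hβ1⟩
    · simp [h]; exact ⟨(hA_mem u v).1, (hA_mem u v).2⟩
  -- row sum of Ahat
  have hrow : ∑ v, Ahat u v = x := by
    have : ∑ v, Ahat u v = (∑ v, A u v) + ∑ v, (if u = v then β else 0) := by
      simp [hAhat_apply, Finset.sum_add_distrib]
    rw [this, Finset.sum_ite_eq Finset.univ u (fun _ => β)]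
    simp [hxdef, (hd u).symm]
  -- dmax bounds
  have hdmax_u : x ≤ dmax + β := by
    have := hdmax.2 ⟨u, rfl⟩
    simp [hxdef]; linarith
  have hdmax1 : 1 ≤ dmax := by
    obtain ⟨v, hv⟩ := hdmax.1
    rw [← hv]; exact hd1 v
  have hdmaxpos : (0:ℝ) < dmax + β := by linarith
  -- M bound : c ^ (-(2α)-2) ≤ M * x ^ (-(2α)-2)
  have hMbound : c ^ (-(2*α) - 2) ≤ M * x ^ (-(2*α) - 2) := by
    have hMeq : M = (dmax + β) ^ (2*α + 2) * c ^ (-(2*α) - 2) := by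
      rw [hM, Real.div_rpow hdmaxpos.le hc.le, div_eq_mul_inv,
        ← Real.rpow_neg hc.le]
      congr 1
      ring
    have h1 : x ^ (2*α + 2) ≤ (dmax + β) ^ (2*α + 2) :=
      Real.rpow_le_rpow hxpos.le hdmax_u (by linarith)
    have h2 : x ^ (2*α + 2) * x ^ (-(2*α) - 2) = 1 := by
      rw [← Real.rpow_add hxpos]; norm_num
    have h3 : (0:ℝ) ≤ x ^ (-(2*α) - 2) := Real.rpow_nonneg hxpos.le _
    have h4 : (0:ℝ) ≤ c ^ (-(2*α) - 2) := Real.rpow_nonneg hc.le _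
    calc c ^ (-(2*α) - 2) = 1 * c ^ (-(2*α) - 2) := by ring
      _ ≤ (x ^ (2*α + 2) * x ^ (-(2*α) - 2)) * c ^ (-(2*α) - 2) := by rw [h2]
      _ ≤ ((dmax + β) ^ (2*α + 2) * x ^ (-(2*α) - 2)) * c ^ (-(2*α) - 2) := by
          apply mul_le_mul_of_nonneg_right (mul_le_mul_of_nonneg_right h1 h3) h4
      _ = M * x ^ (-(2*α) - 2) := by rw [hMeq]; ring
  -- pointwise bound on each summand
  have hpt : ∀ v, (Ahat u v) ^ 2 * (d v + β) ^ (-(2*α)) ≤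
      Ahat u v * (x ^ (-(2*α)) + 2*α * x ^ (-(2*α) - 1) * |d v - d u|
        + α * (2*α + 1) * M * x ^ (-(2*α) - 2) * (d v - d u) ^ 2) := by
    intro v
    have hcy : c ≤ d v + β := by have := hd1 v; simp [hcdef]; linarith
    have hC := taylor_lemC (c := c) (x := x) (y := d v + β) (p := 2*α)
      hc (by linarith) hcx hcy
    have ediff : d v + β - x = d v - d u := by simp [hxdef]
    rw [ediff] at hC
    have e2 : -(2*α) - 1 = -(2*α) - 1 := rfl
    -- strengthen third term with M bound
    have hC2 : (d v + β) ^ (-(2*α)) ≤ x ^ (-(2*α)) + 2*α * x ^ (-(2*α) - 1) * |d v - d u|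
        + α * (2*α + 1) * M * x ^ (-(2*α) - 2) * (d v - d u) ^ 2 := by
      have hcoef : (2*α * (2*α + 1) / 2) * c ^ (-(2*α) - 2) * (d v - d u) ^ 2
          ≤ α * (2*α + 1) * M * x ^ (-(2*α) - 2) * (d v - d u) ^ 2 := by
        have hnn : (0:ℝ) ≤ α * (2*α + 1) * (d v - d u) ^ 2 := by positivity
        nlinarith [hMbound]
      linarith [hC]
    have hAv := hAhat_mem v
    have hsq : (Ahat u v) ^ 2 ≤ Ahat u v := by nlinarith [hAv.1, hAv.2]
    have hynn : (0:ℝ) ≤ (d v + β) ^ (-(2*α)) := Real.rpow_nonneg (hc.le.trans hcy) _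
    calc (Ahat u v) ^ 2 * (d v + β) ^ (-(2*α)) ≤ Ahat u v * (d v + β) ^ (-(2*α)) :=
          mul_le_mul_of_nonneg_right hsq hynn
      _ ≤ _ := mul_le_mul_of_nonneg_left hC2 hAv.1
  -- sum the pointwise bounds
  have hsum : ∑ v, (Ahat u v) ^ 2 * (d v + β) ^ (-(2*α)) ≤
      x ^ (-(2*α)) * x + 2*α * x ^ (-(2*α) - 1) * (Δabs u * x)
        + α * (2*α + 1) * M * x ^ (-(2*α) - 2) * (Δ₂ u * x) := by
    have hS1 : ∑ v, Ahat u v * |d v - d u| = Δabs u * x := by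
      rw [hΔabs u]; exact (div_mul_cancel₀ _ hxpos.ne').symm
    have hS2 : ∑ v, Ahat u v * (d v - d u) ^ 2 = Δ₂ u * x := by
      rw [hΔ₂ u]; exact (div_mul_cancel₀ _ hxpos.ne').symm
    calc ∑ v, (Ahat u v) ^ 2 * (d v + β) ^ (-(2*α))
        ≤ ∑ v, Ahat u v * (x ^ (-(2*α)) + 2*α * x ^ (-(2*α) - 1) * |d v - d u|
            + α * (2*α + 1) * M * x ^ (-(2*α) - 2) * (d v - d u) ^ 2) :=
          Finset.sum_le_sum (fun v _ => hpt v)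
      _ = x ^ (-(2*α)) * (∑ v, Ahat u v)
            + 2*α * x ^ (-(2*α) - 1) * (∑ v, Ahat u v * |d v - d u|)
            + α * (2*α + 1) * M * x ^ (-(2*α) - 2) * (∑ v, Ahat u v * (d v - d u) ^ 2) := by
          rw [Finset.mul_sum, Finset.mul_sum, Finset.mul_sum, ← Finset.sum_add_distrib,
            ← Finset.sum_add_distrib]
          apply Finset.sum_congr rfl
          intro v _
          ring
      _ = _ := by rw [hrow, hS1, hS2]
  -- multiply by x ^ (-(2α)) and finish with rpow algebra
  have hxnn : (0:ℝ) ≤ x ^ (-(2*α)) := Real.rpow_nonneg hxpos.le _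
  have hfin := mul_le_mul_of_nonneg_left hsum hxnn
  have e1 : x ^ (-(2*α)) * (x ^ (-(2*α)) * x) = x ^ (1 - 4*α) := by
    nth_rewrite 3 [← Real.rpow_one x]
    rw [← Real.rpow_add hxpos, ← Real.rpow_add hxpos]; ring_nf
  have e2 : x ^ (-(2*α)) * (x ^ (-(2*α) - 1) * x) = x ^ (-(4*α)) := by
    nth_rewrite 3 [← Real.rpow_one x]
    rw [← Real.rpow_add hxpos, ← Real.rpow_add hxpos]; ring_nf
  have e3 : x ^ (-(2*α)) * (x ^ (-(2*α) - 2) * x) = x ^ (-(1 + 4*α)) := by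
    nth_rewrite 3 [← Real.rpow_one x]
    rw [← Real.rpow_add hxpos, ← Real.rpow_add hxpos]; ring_nf
  calc (d u + β) ^ (-(2 * α)) * ∑ v, (Ahat u v) ^ 2 * (d v + β) ^ (-(2 * α))
      = x ^ (-(2*α)) * ∑ v, (Ahat u v) ^ 2 * (d v + β) ^ (-(2*α)) := by rw [hxdef]
    _ ≤ x ^ (-(2*α)) * (x ^ (-(2*α)) * x + 2*α * x ^ (-(2*α) - 1) * (Δabs u * x)
          + α * (2*α + 1) * M * x ^ (-(2*α) - 2) * (Δ₂ u * x)) := hfin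
    _ = (x ^ (-(2*α)) * (x ^ (-(2*α)) * x))
          + 2*α * Δabs u * (x ^ (-(2*α)) * (x ^ (-(2*α) - 1) * x))
          + α * (2*α + 1) * M * Δ₂ u * (x ^ (-(2*α)) * (x ^ (-(2*α) - 2) * x)) := by ring
    _ = x ^ (1 - 4*α) + 2*α * Δabs u * x ^ (-(4*α))
          + α * (2*α + 1) * M * Δ₂ u * x ^ (-(1 + 4*α)) := by rw [e1, e2, e3]
    _ = _ := by rw [hxdef]
end

section
/- Let n ≥ 1, let A be an n×n real symmetric matrix with nonnegative entries and zero diagonal, let β ≥ 0 and α ∈ [0,1], set Â = A + β·I and d_u = Σ_v A_{uv} with d_u + β > 0 for all u, and let S be the symmetrized convolution operator S_{uv} = Â_{uv}/((d_u+β)^α (d_v+β)^α). Let u and u' be two nodes and let X ∈ ℝ^{n×p} be such that X_v = x̄ for a fixed vector x̄ ∈ ℝ^p, for every v with Â_{uv} > 0 and every v with Â_{u'v} > 0. Then ‖(SX)_u - (SX)_{u'}‖ = |c_u - c_{u'}|·‖x̄‖, where c_w = Σ_v Â_{wv}/((d_w+β)^α (d_v+β)^α); in particular the distance between the two embeddings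 is determined solely by the topology of the two neighborhoods. -/
open Real Finset

/-- Symmetrized convolutions encode topology: if all nodes in the closed neighborhoods
of `u` and `u'` have the same feature vector `x̄`, then
`‖(SX)_u - (SX)_{u'}‖ = |c_u - c_{u'}| ‖x̄‖`, where
`c_w = Σ_v Â_{wv}/((d_w+β)^α (d_v+β)^α)` depends only on the topology. -/
theorem sym_conv_constant_features_distance (n p : ℕ) (hn : 1 ≤ n)
    (A : Matrix (Fin n) (Fin n) ℝ) (hA_symm : A.IsSymm)
    (hA_nonneg : ∀ u v, 0 ≤ A u v) (hA_diag : ∀ u, A u u = 0)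
    (β α : ℝ) (hβ : 0 ≤ β) (hα : α ∈ Set.Icc (0 : ℝ) 1)
    (d : Fin n → ℝ) (hd : ∀ u, d u = ∑ v, A u v) (hdpos : ∀ u, 0 < d u + β)
    (Ahat : Matrix (Fin n) (Fin n) ℝ)
    (hAhat : Ahat = A + β • (1 : Matrix (Fin n) (Fin n) ℝ))
    (S : Matrix (Fin n) (Fin n) ℝ)
    (hS : ∀ u v, S u v = Ahat u v / ((d u + β) ^ α * (d v + β) ^ α))
    (u u' : Fin n)
    (X : Matrix (Fin n) (Fin p) ℝ) (xbar : Fin p → ℝ)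
    (hX : ∀ v : Fin n, (0 < Ahat u v ∨ 0 < Ahat u' v) → (∀ j, X v j = xbar j))
    (c : Fin n → ℝ)
    (hc : ∀ w, c w = ∑ v, Ahat w v / ((d w + β) ^ α * (d v + β) ^ α)) :
    Real.sqrt (∑ j, ((S * X) u j - (S * X) u' j) ^ 2) =
      |c u - c u'| * Real.sqrt (∑ j, (xbar j) ^ 2) := by

  have hAhat_nonneg : ∀ w v, 0 ≤ Ahat w v := by
    intro w v
    rw [hAhat]
    simp only [Matrix.add_apply, Matrix.smul_apply, Matrix.one_apply, smul_eq_mul]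
    by_cases h : w = v <;> simp [h]
    · exact add_nonneg (hA_nonneg v v) hβ
    · exact hA_nonneg w v
  have key : ∀ w : Fin n, (∀ v, 0 < Ahat w v → ∀ j, X v j = xbar j) →
      ∀ j, (S * X) w j = c w * xbar j := by
    intro w hw j
    rw [Matrix.mul_apply, hc, Finset.sum_mul]
    apply Finset.sum_congr rfl
    intro v _
    rw [hS]
    rcases lt_or_eq_of_le (hAhat_nonneg w v) with h | h
    · rw [hw v h j]
    · rw [← h]; simp
  have hu : ∀ j, (S * X) u j = c u * xbar j :=
    key u (fun v h j => hX v (Or.inl h) j)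
  have hu' : ∀ j, (S * X) u' j = c u' * xbar j :=
    key u' (fun v h j => hX v (Or.inr h) j)
  have : ∀ j, ((S * X) u j - (S * X) u' j) ^ 2 = (c u - c u') ^ 2 * (xbar j) ^ 2 := by
    intro j; rw [hu, hu']; ring
  rw [Finset.sum_congr rfl (fun j _ => this j), ← Finset.mul_sum,
    Real.sqrt_mul (sq_nonneg _), Real.sqrt_sq_eq_abs]
end
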